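/- If F ~ N(μ, s²) with s > 0 and f* is a real constant, then E[max(f* − F, 0)] = (f* − μ) Φ((f* − μ)/s) + s φ((f* − μ)/s), where φ and Φ are the standard normal pdf and cdf (the closed-form expression of the Expected Improvement acquisition function for a Gaussian posterior). -/

import Mathlib

open MeasureTheory ProbabilityTheory
open scoped NNReal ENNReal

/-- The standard normal probability density function `φ`. -/
noncomputable def stdNormalPdf (u : ℝ) : ℝ :=
  (Real.sqrt (2 * Real.pi))⁻¹ * Real.exp (-u ^ 2 / 2)

/-- The standard normal cumulative distribution function `Φ`. -/
noncomputable def stdNormalCdf (u : ℝ) : ℝ :=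
  ∫ s in Set.Iic u, stdNormalPdf s

section Aux
open Real


lemma exponent_eq (u : ℝ) : -u ^ 2 / 2 = -(1/2) * u ^ 2 := by ring

lemma stdNormalPdf_eq : stdNormalPdf = fun u => (Real.sqrt (2 * Real.pi))⁻¹ *
    Real.exp (-(1/2) * u ^ 2) := by
  funext u; rw [stdNormalPdf, exponent_eq]

lemma integrable_stdNormalPdf : Integrable stdNormalPdf := by
  rw [stdNormalPdf_eq]
  exact (integrable_exp_neg_mul_sq (by norm_num : (0:ℝ) < 1/2)).const_mul _

lemma integrable_mul_stdNormalPdf : Integrable (fun u => u * stdNormalPdf u) := by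
  have h := (integrable_mul_exp_neg_mul_sq (by norm_num : (0:ℝ) < 1/2)).const_mul
    (Real.sqrt (2 * Real.pi))⁻¹
  refine h.congr (Filter.Eventually.of_forall fun u => ?_)
  rw [stdNormalPdf_eq]; ring

lemma hasDerivAt_stdNormalPdf (u : ℝ) :
    HasDerivAt stdNormalPdf (-u * stdNormalPdf u) u := by
  have h1 : HasDerivAt (fun u : ℝ => -u ^ 2 / 2) (-u) u := by
    have := ((hasDerivAt_pow 2 u).neg.div_const 2)
    exact this.congr_deriv (by ring)
  have h2 := (h1.exp).const_mul (Real.sqrt (2 * Real.pi))⁻¹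
  have h3 : HasDerivAt (fun u : ℝ => (Real.sqrt (2 * Real.pi))⁻¹ * Real.exp (-u ^ 2 / 2))
      (-u * stdNormalPdf u) u := h2.congr_deriv (by rw [stdNormalPdf_eq]; ring)
  exact h3

lemma tendsto_stdNormalPdf_atBot :
    Filter.Tendsto stdNormalPdf Filter.atBot (nhds 0) := by
  have hsq : Filter.Tendsto (fun u : ℝ => u ^ 2) Filter.atBot Filter.atTop := by
    have h2 : Filter.Tendsto (fun x : ℝ => x ^ 2) Filter.atTop Filter.atTop :=
      Filter.tendsto_pow_atTop two_ne_zero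
    exact (h2.comp Filter.tendsto_abs_atBot_atTop).congr fun u => by
      simp [Function.comp, sq_abs]
  have h1 : Filter.Tendsto (fun u : ℝ => -u ^ 2 / 2) Filter.atBot Filter.atBot := by
    apply Filter.Tendsto.atBot_div_const (by norm_num : (0:ℝ) < 2)
    exact Filter.tendsto_neg_atTop_atBot.comp hsq
  have h2 := (Real.tendsto_exp_atBot.comp h1).const_mul (Real.sqrt (2 * Real.pi))⁻¹
  rw [mul_zero] at h2
  exact h2.congr fun u => by simp only [Function.comp_apply, stdNormalPdf]

lemma key_integral (a : ℝ) :
    ∫ u, max (a - u) 0 * stdNormalPdf u = a * stdNormalCdf a + stdNormalPdf a := by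
  have hind : (fun u => max (a - u) 0 * stdNormalPdf u)
      = Set.indicator (Set.Iic a) (fun u => (a - u) * stdNormalPdf u) := by
    funext u
    rw [Set.indicator_apply]
    split_ifs with h
    · rw [max_eq_left (sub_nonneg.2 (Set.mem_Iic.1 h))]
    · rw [max_eq_right (sub_nonpos.2 (le_of_not_ge fun hh => h (Set.mem_Iic.2 hh))), zero_mul]
  rw [hind, integral_indicator measurableSet_Iic]
  have hInt1 : IntegrableOn (fun u => a * stdNormalPdf u) (Set.Iic a) :=
    (integrable_stdNormalPdf.const_mul a).integrableOn
  have hInt2 : IntegrableOn (fun u => -u * stdNormalPdf u) (Set.Iic a) := by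
    simpa only [neg_mul, Pi.neg_def] using integrable_mul_stdNormalPdf.integrableOn.neg
  have hsplit : ∀ u : ℝ, (a - u) * stdNormalPdf u
      = a * stdNormalPdf u + -u * stdNormalPdf u := fun u => by ring
  rw [show (fun u => (a - u) * stdNormalPdf u)
      = fun u => a * stdNormalPdf u + -u * stdNormalPdf u from funext hsplit]
  rw [integral_add hInt1 hInt2, integral_const_mul]
  have hFTC : ∫ u in Set.Iic a, -u * stdNormalPdf u = stdNormalPdf a - 0 :=
    integral_Iic_of_hasDerivAt_of_tendsto' (fun x _ => hasDerivAt_stdNormalPdf x)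
      hInt2 tendsto_stdNormalPdf_atBot
  rw [hFTC, sub_zero, stdNormalCdf]

end Aux

open Real in
/-- Closed form of the Expected Improvement: if `F ~ N(μ, s²)` with `s > 0` and
`f* ∈ ℝ`, then `E[max(f* − F, 0)] = (f* − μ) Φ((f*−μ)/s) + s φ((f*−μ)/s)`. -/
theorem expected_improvement_closed_form
    {Ω : Type*} [MeasureSpace Ω] [IsProbabilityMeasure (ℙ : Measure Ω)]
    (F : Ω → ℝ) (μ : ℝ) (s : ℝ≥0) (hs : 0 < s) (fstar : ℝ)
    (hF : Measurable F)
    (hlaw : Measure.map F ℙ = gaussianReal μ (s ^ 2)) :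
    ∫ ω, max (fstar - F ω) 0 ∂ℙ
      = (fstar - μ) * stdNormalCdf ((fstar - μ) / (s : ℝ))
        + (s : ℝ) * stdNormalPdf ((fstar - μ) / (s : ℝ)) := by
  have hs' : (0:ℝ) < (s:ℝ) := hs
  have hs0 : (s:ℝ) ≠ 0 := ne_of_gt hs'
  set a : ℝ := (fstar - μ) / (s : ℝ) with ha
  have hsa : (s:ℝ) * a = fstar - μ := mul_div_cancel₀ _ hs0
  have hv : (s ^ 2 : ℝ≥0) ≠ 0 := pow_ne_zero _ (ne_of_gt hs)
  -- step 1 : transfer to the Gaussian law on ℝ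
  have hmeas : Measurable fun x : ℝ => max (fstar - x) 0 :=
    (measurable_const.sub measurable_id).max measurable_const
  have step1 : ∫ ω, max (fstar - F ω) 0 ∂ℙ
      = ∫ x, max (fstar - x) 0 ∂(gaussianReal μ (s ^ 2)) := by
    rw [← hlaw, integral_map hF.aemeasurable hmeas.aestronglyMeasurable]
  -- step 2 : write as a Lebesgue integral against the density
  set G : ℝ → ℝ := fun x => gaussianPDFReal μ (s ^ 2) x * max (fstar - x) 0 with hG
  have step2 : ∫ x, max (fstar - x) 0 ∂(gaussianReal μ (s ^ 2)) = ∫ x, G x := by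
    rw [gaussianReal_of_var_ne_zero μ hv]
    have : (gaussianPDF μ (s ^ 2)) = fun x => ((gaussianPDFReal μ (s ^ 2) x).toNNReal : ℝ≥0∞) :=
      rfl
    rw [this, integral_withDensity_eq_integral_smul
      ((measurable_gaussianPDFReal μ (s ^ 2)).real_toNNReal) (fun x => max (fstar - x) 0)]
    refine integral_congr_ae (Filter.Eventually.of_forall fun x => ?_)
    simp [hG, NNReal.smul_def, Real.coe_toNNReal _ (gaussianPDFReal_nonneg μ (s ^ 2) x)]
  -- pointwise computation of G at s*u + μ
  have hpt : ∀ u : ℝ, G ((s:ℝ) * u + μ) = max (a - u) 0 * stdNormalPdf u := by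
    intro u
    have hcoe : ((s ^ 2 : ℝ≥0) : ℝ) = (s:ℝ) ^ 2 := by push_cast; ring
    have hsqrt : Real.sqrt (2 * Real.pi * (s:ℝ) ^ 2) = Real.sqrt (2 * Real.pi) * (s:ℝ) := by
      rw [Real.sqrt_mul (by positivity), Real.sqrt_sq hs'.le]
    have hpdf : gaussianPDFReal μ (s ^ 2) ((s:ℝ) * u + μ)
        = (s:ℝ)⁻¹ * stdNormalPdf u := by
      rw [gaussianPDFReal, hcoe, hsqrt, stdNormalPdf]
      have hexp : -((s:ℝ) * u + μ - μ) ^ 2 / (2 * (s:ℝ) ^ 2) = -u ^ 2 / 2 := by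
        field_simp
        ring
      rw [hexp, mul_inv]
      ring
    have hmax : max (fstar - ((s:ℝ) * u + μ)) 0 = (s:ℝ) * max (a - u) 0 := by
      have h1 : fstar - ((s:ℝ) * u + μ) = (s:ℝ) * (a - u) := by
        rw [mul_sub, hsa]; ring
      rw [h1, mul_max_of_nonneg _ _ hs'.le, mul_zero]
    rw [hG]
    simp only
    rw [hpdf, hmax]
    field_simp
  -- step 3 : substitution x = s u + μ
  have hsub : ∫ u, G ((s:ℝ) * u + μ) = |(s:ℝ)⁻¹| • ∫ x, G x := by
    calc ∫ u, G ((s:ℝ) * u + μ) = ∫ u, (fun x => G (x + μ)) ((s:ℝ) * u) := rfl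
      _ = |(s:ℝ)⁻¹| • ∫ x, G (x + μ) :=
          MeasureTheory.Measure.integral_comp_mul_left (fun x => G (x + μ)) (s:ℝ)
      _ = |(s:ℝ)⁻¹| • ∫ x, G x := by rw [integral_add_right_eq_self]
  have hleft : ∫ u, G ((s:ℝ) * u + μ)
      = a * stdNormalCdf a + stdNormalPdf a := by
    rw [show (fun u => G ((s:ℝ) * u + μ))
        = fun u => max (a - u) 0 * stdNormalPdf u from funext hpt]
    exact key_integral a
  have habs : |(s:ℝ)⁻¹| = (s:ℝ)⁻¹ := abs_of_pos (inv_pos.2 hs')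
  have hGint : ∫ x, G x = (s:ℝ) * (a * stdNormalCdf a + stdNormalPdf a) := by
    have hthis := hsub
    rw [hleft, habs, smul_eq_mul] at hthis
    rw [hthis]
    field_simp
  rw [step1, step2, hGint, mul_add, ← mul_assoc, hsa]
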